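/- (Extended mechanism, price consistency at equilibrium) In the extended mechanism allowing |C_i| ≥ 2, let m* be any generalized Nash equilibrium of the induced game. Then for every platform i ∈ I with |C_i| = 2, writing C_i = {i, l}, the price platform i proposes for its own filter equals the price proposed for i's filter by its competitor: p̃_i^{i*} = p̃_i^{l*}. Consequently, for every i ∈ I and every l ∈ C_{-i}, the equilibrium subsidy price received by platform i from platform l equals the equilibrium payment price paid by platform l for platform i's filter: σ_l^{*i} = π_i^{*l}. -/
import Mathlib


open Finset

noncomputable section

namespace MisinfoFilterExtended

/-- A message of a social-media platform: the proposed minimum average trust `ht`,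
the proposed prices `pP l` for the filters of the other competing platforms,
the proposed price `pG` for the government's lower bound, the proposed filters `a k`
for the competing platforms and the proposed lower bound `aG` for the government. -/
structure PlatformMsg (N : ℕ) where
  ht : ℝ
  pP : Fin N → ℝ
  pG : ℝ
  a : Fin N → ℝ
  aG : ℝ

/-- The government's message: a proposed price `pG` and a proposed lower bound `aG`. -/
structure GovMsg where
  pG : ℝ
  aG : ℝ

/-- A message profile: one message per platform and one for the government. -/
structure Profile (N : ℕ) where
  pf : Fin N → PlatformMsg N
  gov : GovMsg

/-- Validity of a platform message: nonnegative proposed trust and prices. -/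
def PlatformMsg.Valid {N : ℕ} (msg : PlatformMsg N) : Prop :=
  0 ≤ msg.ht ∧ (∀ l, 0 ≤ msg.pP l) ∧ 0 ≤ msg.pG

/-- Validity of a government message: nonnegative proposed price. -/
def GovMsg.Valid (g : GovMsg) : Prop := 0 ≤ g.pG

/-- Unilateral deviation of platform `i` to message `msg`. -/
def Profile.updPf {N : ℕ} (m : Profile N) (i : Fin N) (msg : PlatformMsg N) : Profile N :=
  ⟨Function.update m.pf i msg, m.gov⟩

/-- Unilateral deviation of the government to message `g`. -/
def Profile.updGov {N : ℕ} (m : Profile N) (g : GovMsg) : Profile N :=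
  ⟨m.pf, g⟩

/-- The data of the misinformation-filtering game: `N ≥ 1` platforms, competing sets
`C i ∋ i` with `|C i| ≥ 2` and symmetric competition, user fractions `n` (positive,
summing to one), average trust functions `h i`, valuations `v i` (each depending only on
the coordinates in `C i`), the government's valuation `v0` and budget `b0 ≥ 0`. -/
structure Framework (N : ℕ) where
  hN : 1 ≤ N
  C : Fin N → Finset (Fin N)
  mem_C : ∀ i, i ∈ C i
  card_C : ∀ i, 2 ≤ (C i).card
  symm_C : ∀ i k, i ∈ C k ↔ k ∈ C i
  n : Fin N → ℝ
  n_pos : ∀ i, 0 < n i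
  n_sum : ∑ i, n i = 1
  h : Fin N → ℝ → ℝ
  v : Fin N → (Fin N → ℝ) → ℝ
  v_localized : ∀ i p q, (∀ k ∈ C i, p k = q k) → v i p = v i q
  v0 : ℝ → ℝ
  b0 : ℝ
  b0_nonneg : 0 ≤ b0

namespace Framework

variable {N : ℕ}

/-- Allocated filter `α_i(m)`: the average of proposals for `i` by the platforms in `C i`. -/
def alpha (F : Framework N) (m : Profile N) (i : Fin N) : ℝ :=
  (∑ k ∈ F.C i, (m.pf k).a i) / ((F.C i).card : ℝ)

/-- Allocated lower bound `α₀(m)`: the average of all proposed lower bounds. -/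
def alpha0 (F : Framework N) (m : Profile N) : ℝ :=
  (m.gov.aG + ∑ k, (m.pf k).aG) / ((N : ℝ) + 1)

/-- `Σ_k n_k · h̃_k`. -/
def trustSum (F : Framework N) (m : Profile N) : ℝ := ∑ k, F.n k * (m.pf k).ht

/-- Allocated minimum average trust `η_i(m)`. -/
def eta (F : Framework N) (m : Profile N) (i : Fin N) : ℝ :=
  min ((F.n i * (m.pf i).ht / F.trustSum m) * F.alpha0 m) 1

/-- Extended payment price `π_target^payer` paid by `payer` per unit of the filter of
`target`: the price `p̃_target^target` proposed by `target` itself when `|C target| = 2`,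
and otherwise the average of the prices proposed for `target` by the platforms in
`C target` other than `target` and `payer`. -/
def price (F : Framework N) (m : Profile N) (payer target : Fin N) : ℝ :=
  if (F.C target).card = 2 then (m.pf target).pP target
  else
    (∑ k ∈ ((F.C target).erase target).erase payer, (m.pf k).pP target) /
      (((F.C target).card : ℝ) - 2)

/-- Extended subsidy price `σ_l^i` received by platform `i` from platform `l` per unit of
the filter of `i`: the price `p̃_i^l` proposed by `l` when `|C i| = 2`, and otherwise the
average of the prices proposed for `i` by the platforms in `C i` other than `i`, `l`. -/
def subsidy (F : Framework N) (m : Profile N) (i l : Fin N) : ℝ :=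
  if (F.C i).card = 2 then (m.pf l).pP i
  else
    (∑ k ∈ ((F.C i).erase i).erase l, (m.pf k).pP i) / (((F.C i).card : ℝ) - 2)

/-- Allocated government price `π₀`. -/
def price0 (F : Framework N) (m : Profile N) : ℝ := (∑ i, (m.pf i).pG) / (N : ℝ)

/-- Average proposal `ã_l^{-i}` for platform `l` by the platforms in `C l` other than `i`. -/
def aAvgMinus (F : Framework N) (m : Profile N) (i l : Fin N) : ℝ :=
  (∑ k ∈ (F.C l).erase i, (m.pf k).a l) / (((F.C l).card : ℝ) - 1)

/-- Average proposal `ã₀^{-i}` of lower bounds by all players except platform `i`. -/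
def aGAvgMinus (F : Framework N) (m : Profile N) (i : Fin N) : ℝ :=
  (m.gov.aG + ∑ k, (m.pf k).aG - (m.pf i).aG) / (N : ℝ)

/-- Extended tax `τ_i(m)` of platform `i`, including the price-consistency penalties that
apply when `|C i| = 2` or `|C l| = 2` for a competitor `l`. -/
def tax (F : Framework N) (m : Profile N) (i : Fin N) : ℝ :=
  - m.gov.pG * F.eta m i
  - (∑ l ∈ (F.C i).erase i, F.subsidy m i l) * F.alpha m i
  + ∑ l ∈ (F.C i).erase i, F.price m i l * F.alpha m l
  + (∑ l ∈ (F.C i).erase i, (m.pf i).pP l * ((m.pf i).a l - F.aAvgMinus m i l) ^ 2)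
  + (m.pf i).pG * ((m.pf i).aG - F.aGAvgMinus m i) ^ 2
  + ∑ l ∈ (F.C i).erase i,
      ((if (F.C i).card = 2 then ((m.pf i).pP i - (m.pf l).pP i) ^ 2 else 0)
        + (if (F.C l).card = 2 then ((m.pf i).pP l - (m.pf l).pP l) ^ 2 else 0))

/-- Tax (investment) `τ₀(m)` of the government. -/
def tax0 (F : Framework N) (m : Profile N) : ℝ :=
  F.price0 m * F.alpha0 m + (m.gov.pG - F.price0 m) ^ 2

/-- Utility of platform `i`. -/
def util (F : Framework N) (m : Profile N) (i : Fin N) : ℝ :=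
  F.v i (F.alpha m) - F.tax m i

/-- Utility of the government. -/
def util0 (F : Framework N) (m : Profile N) : ℝ := F.v0 (F.alpha0 m) - F.tax0 m

/-- An admissible message profile: all messages valid and `Σ_k n_k h̃_k > 0`
(profiles with `Σ_k n_k h̃_k = 0` are excluded by the social planner). -/
def ProfileValid (F : Framework N) (m : Profile N) : Prop :=
  (∀ i, (m.pf i).Valid) ∧ m.gov.Valid ∧ 0 < F.trustSum m

/-- Generalized Nash equilibrium of the induced game: the profile is admissible, every
player's own allocation is feasible, no platform can profit by a unilateral deviation whose
allocated filter stays in its feasible set `S_i`, and the government cannot profit by a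
unilateral deviation satisfying its feasibility and budget constraints. -/
def IsGNE (F : Framework N) (m : Profile N) : Prop :=
  F.ProfileValid m ∧
  (∀ i, F.alpha m i ∈ Set.Icc (0:ℝ) 1 ∧ F.eta m i ≤ F.n i * F.h i (F.alpha m i)) ∧
  F.alpha0 m ∈ Set.Icc (0:ℝ) 1 ∧ F.price0 m * F.alpha0 m ≤ F.b0 ∧
  (∀ (i : Fin N) (msg : PlatformMsg N), msg.Valid →
    0 < F.trustSum (m.updPf i msg) →
    F.alpha (m.updPf i msg) i ∈ Set.Icc (0:ℝ) 1 →
    F.eta (m.updPf i msg) i ≤ F.n i * F.h i (F.alpha (m.updPf i msg) i) →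
    F.util (m.updPf i msg) i ≤ F.util m i) ∧
  (∀ g : GovMsg, g.Valid →
    F.alpha0 (m.updGov g) ∈ Set.Icc (0:ℝ) 1 →
    F.price0 (m.updGov g) * F.alpha0 (m.updGov g) ≤ F.b0 →
    F.util0 (m.updGov g) ≤ F.util0 m)

end Framework

/-- The standing regularity assumptions of the model: each `h i` maps `[0,1]` into `[0,1]`
and is strictly increasing, concave and differentiable; each valuation `v i` is nonnegative,
concave and differentiable on the box, decreasing in the own coordinate and strictly
increasing in the coordinates of the other competing platforms; the government's valuation
`v0` is nonnegative, increasing, concave and differentiable on `[0,1]`. -/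
structure Framework.Regular {N : ℕ} (F : Framework N) : Prop where
  h_maps : ∀ i, Set.MapsTo (F.h i) (Set.Icc 0 1) (Set.Icc 0 1)
  h_strictMono : ∀ i, StrictMonoOn (F.h i) (Set.Icc 0 1)
  h_concave : ∀ i, ConcaveOn ℝ (Set.Icc 0 1) (F.h i)
  h_diff : ∀ i, DifferentiableOn ℝ (F.h i) (Set.Icc 0 1)
  v_nonneg : ∀ i p, (∀ k, p k ∈ Set.Icc (0:ℝ) 1) → 0 ≤ F.v i p
  v_concave : ∀ i, ConcaveOn ℝ {p : Fin N → ℝ | ∀ k, p k ∈ Set.Icc (0:ℝ) 1} (F.v i)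
  v_diff : ∀ i, DifferentiableOn ℝ (F.v i) {p : Fin N → ℝ | ∀ k, p k ∈ Set.Icc (0:ℝ) 1}
  v_own_anti : ∀ i p, (∀ k, p k ∈ Set.Icc (0:ℝ) 1) →
    ∀ x y : ℝ, x ∈ Set.Icc (0:ℝ) 1 → y ∈ Set.Icc (0:ℝ) 1 → x ≤ y →
      F.v i (Function.update p i y) ≤ F.v i (Function.update p i x)
  v_other_strictMono : ∀ i l, l ∈ F.C i → l ≠ i →
    ∀ p, (∀ k, p k ∈ Set.Icc (0:ℝ) 1) →
    ∀ x y : ℝ, x ∈ Set.Icc (0:ℝ) 1 → y ∈ Set.Icc (0:ℝ) 1 → x < y →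
      F.v i (Function.update p l x) < F.v i (Function.update p l y)
  v0_nonneg : ∀ x ∈ Set.Icc (0:ℝ) 1, 0 ≤ F.v0 x
  v0_mono : MonotoneOn F.v0 (Set.Icc 0 1)
  v0_concave : ConcaveOn ℝ (Set.Icc 0 1) F.v0
  v0_diff : DifferentiableOn ℝ F.v0 (Set.Icc 0 1)

end MisinfoFilterExtended

end

namespace MisinfoFilterExtended

/-- **Extended mechanism, price consistency at equilibrium.** In the
extended mechanism allowing `|C i| ≥ 2`, at any GNE `m` of the induced game, every platform
`i` with `|C i| = 2` proposes for its own filter the same price as its competitor `l`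
(`p̃_i^{i*} = p̃_i^{l*}`), and consequently, for every `i` and every `l ∈ C_{-i}`, the
equilibrium subsidy price received by `i` from `l` equals the equilibrium payment price
paid by `l` for `i`'s filter: `σ_l^{*i} = π_i^{*l}`. -/
theorem extended_price_consistency_at_GNE {N : ℕ} (F : Framework N) (hreg : F.Regular)
    (m : Profile N) (hm : F.IsGNE m) :
    (∀ i l, (F.C i).card = 2 → l ∈ F.C i → l ≠ i →
      (m.pf i).pP i = (m.pf l).pP i) ∧
    (∀ i l, l ∈ F.C i → l ≠ i → F.subsidy m i l = F.price m l i) := by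
  have key : ∀ i l, (F.C i).card = 2 → l ∈ F.C i → l ≠ i →
      (m.pf i).pP i = (m.pf l).pP i := by
    intro i l hcard hl hli
    set msg : PlatformMsg N :=
      { ht := (m.pf i).ht
        pP := Function.update (m.pf i).pP i ((m.pf l).pP i)
        pG := (m.pf i).pG
        a := (m.pf i).a
        aG := (m.pf i).aG } with hmsg
    set m' := m.updPf i msg with hm'
    have hpfi : m'.pf i = msg := by
      simp [hm', Profile.updPf]
    have hpfne : ∀ k, k ≠ i → m'.pf k = m.pf k := by
      intro k hk
      simp [hm', Profile.updPf, Function.update_of_ne hk]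
    have hgov : m'.gov = m.gov := rfl
    have hht : ∀ k, (m'.pf k).ht = (m.pf k).ht := by
      intro k
      rcases eq_or_ne k i with rfl | hk
      · rw [hpfi]
      · rw [hpfne k hk]
    have ha : ∀ k, (m'.pf k).a = (m.pf k).a := by
      intro k
      rcases eq_or_ne k i with rfl | hk
      · rw [hpfi]
      · rw [hpfne k hk]
    have haG : ∀ k, (m'.pf k).aG = (m.pf k).aG := by
      intro k
      rcases eq_or_ne k i with rfl | hk
      · rw [hpfi]
      · rw [hpfne k hk]
    have hpG : ∀ k, (m'.pf k).pG = (m.pf k).pG := by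
      intro k
      rcases eq_or_ne k i with rfl | hk
      · rw [hpfi]
      · rw [hpfne k hk]
    have hpPi : (m'.pf i).pP = Function.update (m.pf i).pP i ((m.pf l).pP i) := by
      rw [hpfi]
    have hpPil : (m'.pf i).pP l = (m.pf i).pP l := by
      rw [hpPi, Function.update_of_ne hli]
    have hpPii : (m'.pf i).pP i = (m.pf l).pP i := by
      rw [hpPi, Function.update_self]
    -- the erased competing set is the singleton {l}
    have herase : (F.C i).erase i = {l} := by
      have hc1 : ((F.C i).erase i).card = 1 := by
        rw [Finset.card_erase_of_mem (F.mem_C i), hcard]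
      obtain ⟨a, hae⟩ := Finset.card_eq_one.mp hc1
      have : l ∈ ((F.C i).erase i) := Finset.mem_erase.mpr ⟨hli, hl⟩
      rw [hae] at this ⊢
      rw [Finset.mem_singleton.mp this]
    -- equality of all allocation-level quantities
    have htrust : F.trustSum m' = F.trustSum m := by
      unfold Framework.trustSum
      exact Finset.sum_congr rfl fun k _ => by rw [hht k]
    have halpha : F.alpha m' = F.alpha m := by
      funext j
      unfold Framework.alpha
      congr 1
      exact Finset.sum_congr rfl fun k _ => by rw [ha k]
    have halpha0 : F.alpha0 m' = F.alpha0 m := by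
      unfold Framework.alpha0
      rw [hgov]
      congr 2
      exact Finset.sum_congr rfl fun k _ => by rw [haG k]
    have heta : F.eta m' i = F.eta m i := by
      unfold Framework.eta
      rw [htrust, halpha0, hht i]
    have hsub : F.subsidy m' i l = F.subsidy m i l := by
      unfold Framework.subsidy
      rw [if_pos hcard, if_pos hcard, hpfne l hli]
    have hprice : F.price m' i l = F.price m i l := by
      unfold Framework.price
      by_cases h2 : (F.C l).card = 2
      · rw [if_pos h2, if_pos h2, hpfne l hli]
      · rw [if_neg h2, if_neg h2]
        congr 1
        refine Finset.sum_congr rfl fun k hk => ?_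
        have hki : k ≠ i := (Finset.mem_erase.mp hk).1
        rw [hpfne k hki]
    have haAvg : F.aAvgMinus m' i l = F.aAvgMinus m i l := by
      unfold Framework.aAvgMinus
      congr 1
      exact Finset.sum_congr rfl fun k _ => by rw [ha k]
    have haGAvg : F.aGAvgMinus m' i = F.aGAvgMinus m i := by
      unfold Framework.aGAvgMinus
      have hs : ∑ k, (m'.pf k).aG = ∑ k, (m.pf k).aG :=
        Finset.sum_congr rfl fun k _ => by rw [haG k]
      rw [hgov, hs, haG i]
    -- tax difference
    have htax : F.tax m' i =
        F.tax m i - ((m.pf i).pP i - (m.pf l).pP i) ^ 2 := by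
      unfold Framework.tax
      rw [herase]
      simp only [Finset.sum_singleton]
      rw [hgov, heta, hsub, hprice, halpha, haAvg, haGAvg, hpPil, hpG i, haG i,
        hpPii, hpfne l hli, ha i]
      simp only [if_pos hcard]
      ring
    have hutil : F.util m' i = F.util m i + ((m.pf i).pP i - (m.pf l).pP i) ^ 2 := by
      unfold Framework.util
      rw [halpha, htax]
      ring
    -- apply the GNE deviation property
    obtain ⟨⟨hvalid, hgval, htpos⟩, hfeas, _, _, hdev, _⟩ := hm
    have hmsgval : msg.Valid := by
      obtain ⟨h1, h2, h3⟩ := hvalid i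
      refine ⟨h1, ?_, h3⟩
      intro k
      rcases eq_or_ne k i with rfl | hk
      · rw [hmsg]
        simpa using (hvalid l).2.1 k
      · show (0:ℝ) ≤ Function.update (m.pf i).pP i ((m.pf l).pP i) k
        rw [Function.update_of_ne hk]
        exact h2 k
    have hle : F.util m' i ≤ F.util m i := by
      refine hdev i msg hmsgval ?_ ?_ ?_
      · rw [show m.updPf i msg = m' from rfl, htrust]; exact htpos
      · rw [show m.updPf i msg = m' from rfl, halpha]; exact (hfeas i).1
      · rw [show m.updPf i msg = m' from rfl, heta, halpha]; exact (hfeas i).2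
    have hsq : ((m.pf i).pP i - (m.pf l).pP i) ^ 2 ≤ 0 := by linarith [hutil ▸ hle]
    have : (m.pf i).pP i - (m.pf l).pP i = 0 := by
      have := le_antisymm hsq (sq_nonneg _)
      exact pow_eq_zero_iff (by norm_num) |>.mp this
    linarith
  refine ⟨key, ?_⟩
  intro i l hl hli
  by_cases h2 : (F.C i).card = 2
  · unfold Framework.subsidy Framework.price
    rw [if_pos h2, if_pos h2, key i l h2 hl hli]
  · unfold Framework.subsidy Framework.price
    rw [if_neg h2, if_neg h2]

end MisinfoFilterExtended
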